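/- arXiv:2508.12896 — 2 statements merged into one kernel-verified Lean document; each statement's English description precedes it below -/
import Mathlib

section
/- For A(t) = N0·e^{-αt} + Umax·(1 - e^{-βt}) with α, β, N0, Umax > 0 and α > β, the function A is nondecreasing on [0, ∞) if and only if βUmax ≥ αN0. -/
open Real

noncomputable def A (N0 α Umax β t : ℝ) : ℝ :=
  N0 * Real.exp (-α * t) + Umax * (1 - Real.exp (-β * t))

lemma hasDerivAt_A (N0 α Umax β t : ℝ) :
    HasDerivAt (A N0 α Umax β)
      (β * Umax * Real.exp (-β * t) - α * N0 * Real.exp (-α * t)) t := by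
  have e1 : HasDerivAt (fun t : ℝ => -α * t) (-α) t := by
    simpa using (hasDerivAt_id t).const_mul (-α)
  have e2 : HasDerivAt (fun t : ℝ => -β * t) (-β) t := by
    simpa using (hasDerivAt_id t).const_mul (-β)
  have h1 := (e1.exp.const_mul N0)
  have h2 := ((e2.exp.const_sub 1).const_mul Umax)
  have := h1.add h2
  have key : β * Umax * Real.exp (-β * t) - α * N0 * Real.exp (-α * t) =
      N0 * (Real.exp (-α * t) * -α) + Umax * -(Real.exp (-β * t) * -β) := by ring
  rw [key]
  exact this

theorem stmt2 (N0 α Umax β : ℝ) (hα : 0 < α) (hβ : 0 < β) (hN0 : 0 < N0)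
    (hU : 0 < Umax) (hαβ : α > β) :
    MonotoneOn (A N0 α Umax β) (Set.Ici (0 : ℝ)) ↔ β * Umax ≥ α * N0 := by
  constructor
  · intro hmono
    by_contra hlt
    push_neg at hlt
    have hd := hasDerivAt_A N0 α Umax β 0
    simp only [mul_zero, neg_zero, Real.exp_zero, mul_one] at hd
    have hslope := hasDerivAt_iff_tendsto_slope.mp hd
    have hc : β * Umax - α * N0 < 0 := by linarith
    have hten : Filter.Tendsto (slope (A N0 α Umax β) 0) (nhdsWithin 0 (Set.Ioi 0))
        (nhds (β * Umax - α * N0)) :=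
      hslope.mono_left (nhdsWithin_mono _ (fun x hx => ne_of_gt hx))
    have hev : ∀ᶠ t in nhdsWithin (0:ℝ) (Set.Ioi 0),
        slope (A N0 α Umax β) 0 t < 0 :=
      hten.eventually_lt_const hc
    obtain ⟨t, ht, ht0⟩ := (hev.and (eventually_mem_nhdsWithin)).exists
    have htpos : (0:ℝ) < t := ht0
    have : A N0 α Umax β t < A N0 α Umax β 0 := by
      have := ht
      rw [slope_def_field] at this
      have h2 : (A N0 α Umax β t - A N0 α Umax β 0) / (t - 0) < 0 := by
        simpa [div_eq_iff] using this
      rw [sub_zero] at h2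
      have h3 := (div_lt_iff₀ htpos).mp h2
      linarith
    have hmle := hmono (Set.self_mem_Ici) (Set.mem_Ici.mpr htpos.le) htpos.le
    linarith
  · intro hge
    apply monotoneOn_of_deriv_nonneg (convex_Ici 0)
    · exact Continuous.continuousOn (by
        have : Continuous (A N0 α Umax β) := by
          unfold A
          continuity
        exact this)
    · intro t ht
      exact (hasDerivAt_A N0 α Umax β t).differentiableAt.differentiableWithinAt
    · intro t ht
      rw [interior_Ici] at ht
      have htpos : (0:ℝ) < t := ht
      rw [(hasDerivAt_A N0 α Umax β t).deriv]
      have hexp : Real.exp (-α * t) ≤ Real.exp (-β * t) := by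
        apply Real.exp_le_exp.mpr
        nlinarith
      have h1 : α * N0 * Real.exp (-α * t) ≤ β * Umax * Real.exp (-β * t) := by
        apply mul_le_mul hge hexp (Real.exp_pos _).le
        positivity
      linarith
end

section
/- Suppose two parameter vectors (α, β, N0, Umax) and (α', β', N0', Umax'), all entries positive with α ≠ β, α' ≠ β', N0 ≠ Umax, and α > β, produce the same function A(t) = N0·e^{-αt} + Umax·(1 - e^{-βt}) = N0'·e^{-α't} + Umax'·(1 - e^{-β't}) for all t ≥ 0. Then (α, β, N0, Umax) = (α', β', N0', Umax'). -/
open Real Filter Topology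

open Filter Topology in
private lemma exp_lim_zero {c : ℝ} (hc : c < 0) :
    Tendsto (fun t : ℝ => Real.exp (c*t)) atTop (𝓝 0) :=
  Real.tendsto_exp_atBot.comp (tendsto_id.const_mul_atTop_of_neg hc)

open Filter Topology in
private lemma exp_lim_top {c : ℝ} (hc : 0 < c) :
    Tendsto (fun t : ℝ => Real.exp (c*t)) atTop atTop :=
  Real.tendsto_exp_atTop.comp (tendsto_id.const_mul_atTop hc)

open Filter Topology in
private lemma A_lim (N0 α Umax β : ℝ) (hα : 0 < α) (hβ : 0 < β) :
    Tendsto (fun t => A N0 α Umax β t) atTop (𝓝 Umax) := by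
  have h1 := (exp_lim_zero (neg_neg_iff_pos.2 hα)).const_mul N0
  have h2 := ((exp_lim_zero (neg_neg_iff_pos.2 hβ)).const_sub 1).const_mul Umax
  have := h1.add h2
  simpa [A] using this

theorem stmt9 (α β N0 Umax α' β' N0' Umax' : ℝ)
    (hα : 0 < α) (hβ : 0 < β) (hN0 : 0 < N0) (hU : 0 < Umax)
    (hα' : 0 < α') (hβ' : 0 < β') (hN0' : 0 < N0') (hU' : 0 < Umax')
    (hne : α ≠ β) (hne' : α' ≠ β') (hNU : N0 ≠ Umax) (hord : α > β)
    (heq : ∀ t : ℝ, 0 ≤ t → A N0 α Umax β t = A N0' α' Umax' β' t) :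
    α = α' ∧ β = β' ∧ N0 = N0' ∧ Umax = Umax' := by
  classical
  have heqev : (fun t => A N0 α Umax β t) =ᶠ[Filter.atTop] (fun t => A N0' α' Umax' β' t) := by
    filter_upwards [Filter.eventually_ge_atTop (0:ℝ)] with t ht using heq t ht
  -- Step 1: Umax = Umax'
  have hUU : Umax = Umax' := by
    have h1 := A_lim N0 α Umax β hα hβ
    have h2 := (A_lim N0' α' Umax' β' hα' hβ').congr' heqev.symm
    exact tendsto_nhds_unique h1 h2
  subst hUU
  -- Step 2: key equation multiplied by exp(β t)
  have hg2 : ∀ t : ℝ, 0 ≤ t →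
      N0 * Real.exp ((β-α)*t) - Umax =
      N0' * Real.exp ((β-α')*t) - Umax * Real.exp ((β-β')*t) := by
    intro t ht
    have h := heq t ht
    simp only [A] at h
    have eA : Real.exp ((β-α)*t) = Real.exp (-α*t) * Real.exp (β*t) := by
      rw [← Real.exp_add]; ring_nf
    have eB : Real.exp ((β-α')*t) = Real.exp (-α'*t) * Real.exp (β*t) := by
      rw [← Real.exp_add]; ring_nf
    have eC : Real.exp ((β-β')*t) = Real.exp (-β'*t) * Real.exp (β*t) := by
      rw [← Real.exp_add]; ring_nf
    have eD : Real.exp (-β*t) * Real.exp (β*t) = 1 := by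
      rw [← Real.exp_add, show -β*t + β*t = 0 by ring, Real.exp_zero]
    linear_combination Real.exp (β*t) * h + N0 * eA - N0' * eB + Umax * eC + Umax * eD
  -- Limit of LHS is -Umax
  have hL : Filter.Tendsto (fun t => N0 * Real.exp ((β-α)*t) - Umax)
      Filter.atTop (𝓝 (-Umax)) := by
    have := ((exp_lim_zero (by linarith : β - α < 0)).const_mul N0).sub_const Umax
    simpa using this
  have hR : Filter.Tendsto (fun t => N0' * Real.exp ((β-α')*t) - Umax * Real.exp ((β-β')*t))
      Filter.atTop (𝓝 (-Umax)) := by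
    refine hL.congr' ?_
    filter_upwards [Filter.eventually_ge_atTop (0:ℝ)] with t ht using hg2 t ht
  -- Step 3: β = β'
  have hββ : β = β' := by
    by_contra hne2
    rcases lt_or_gt_of_ne hne2 with hlt | hgt
    · -- β < β'
      rcases lt_trichotomy α' β with hc | hc | hc
      · -- α' < β : RHS → atTop
        have hfac : (fun t => N0' * Real.exp ((β-α')*t) - Umax * Real.exp ((β-β')*t))
            = fun t => Real.exp ((β-α')*t) * (N0' - Umax * Real.exp ((α'-β')*t)) := by
          funext t
          have : Real.exp ((β-α')*t) * Real.exp ((α'-β')*t) = Real.exp ((β-β')*t) := by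
            rw [← Real.exp_add]; ring_nf
          linear_combination Umax * this
        have htop : Filter.Tendsto (fun t => N0' * Real.exp ((β-α')*t)
            - Umax * Real.exp ((β-β')*t)) Filter.atTop Filter.atTop := by
          rw [hfac]
          refine (exp_lim_top (by linarith)).atTop_mul_pos hN0' ?_
          have := ((exp_lim_zero (by linarith : α' - β' < 0)).const_mul Umax).const_sub N0'
          simpa using this
        exact not_tendsto_atTop_of_tendsto_nhds hR htop
      · -- α' = β : limit is N0'
        have : Filter.Tendsto (fun t => N0' * Real.exp ((β-α')*t)
            - Umax * Real.exp ((β-β')*t)) Filter.atTop (𝓝 N0') := by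
          have h1 : Filter.Tendsto (fun t : ℝ => N0' * Real.exp ((β-α')*t))
              Filter.atTop (𝓝 N0') := by
            have hz : β - α' = 0 := by rw [hc]; ring
            simpa [hz] using
              (tendsto_const_nhds : Filter.Tendsto (fun _ : ℝ => N0') Filter.atTop (𝓝 N0'))
          have h2 := (exp_lim_zero (by linarith : β - β' < 0)).const_mul Umax
          have := h1.sub h2
          simpa using this
        have := tendsto_nhds_unique hR this
        linarith
      · -- β < α' : RHS → 0
        have : Filter.Tendsto (fun t => N0' * Real.exp ((β-α')*t)
            - Umax * Real.exp ((β-β')*t)) Filter.atTop (𝓝 0) := by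
          have h1 := (exp_lim_zero (by linarith : β - α' < 0)).const_mul N0'
          have h2 := (exp_lim_zero (by linarith : β - β' < 0)).const_mul Umax
          have := h1.sub h2
          simpa using this
        have := tendsto_nhds_unique hR this
        linarith
    · -- β' < β
      rcases lt_or_gt_of_ne hne' with hc | hc
      · -- α' < β' < β : RHS → atTop
        have hfac : (fun t => N0' * Real.exp ((β-α')*t) - Umax * Real.exp ((β-β')*t))
            = fun t => Real.exp ((β-α')*t) * (N0' - Umax * Real.exp ((α'-β')*t)) := by
          funext t
          have : Real.exp ((β-α')*t) * Real.exp ((α'-β')*t) = Real.exp ((β-β')*t) := by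
            rw [← Real.exp_add]; ring_nf
          linear_combination Umax * this
        have htop : Filter.Tendsto (fun t => N0' * Real.exp ((β-α')*t)
            - Umax * Real.exp ((β-β')*t)) Filter.atTop Filter.atTop := by
          rw [hfac]
          refine (exp_lim_top (by linarith)).atTop_mul_pos hN0' ?_
          have := ((exp_lim_zero (by linarith : α' - β' < 0)).const_mul Umax).const_sub N0'
          simpa using this
        exact not_tendsto_atTop_of_tendsto_nhds hR htop
      · -- β' < α' : RHS → atBot
        have hfac : (fun t => N0' * Real.exp ((β-α')*t) - Umax * Real.exp ((β-β')*t))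
            = fun t => Real.exp ((β-β')*t) * (N0' * Real.exp ((β'-α')*t) - Umax) := by
          funext t
          have : Real.exp ((β-β')*t) * Real.exp ((β'-α')*t) = Real.exp ((β-α')*t) := by
            rw [← Real.exp_add]; ring_nf
          linear_combination -N0' * this
        have hbot : Filter.Tendsto (fun t => N0' * Real.exp ((β-α')*t)
            - Umax * Real.exp ((β-β')*t)) Filter.atTop Filter.atBot := by
          rw [hfac]
          refine (exp_lim_top (by linarith)).atTop_mul_neg (by linarith : -Umax < 0) ?_
          have := ((exp_lim_zero (by linarith : β' - α' < 0)).const_mul N0').sub_const Umax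
          simpa using this
        exact not_tendsto_atBot_of_tendsto_nhds hR hbot
  subst hββ
  -- Step 4: N0 exp(-αt) = N0' exp(-α't)
  have hkey : ∀ t : ℝ, 0 ≤ t → N0 * Real.exp (-α*t) = N0' * Real.exp (-α'*t) := by
    intro t ht
    have h := heq t ht
    simp only [A] at h
    linarith
  have hN : N0 = N0' := by
    have := hkey 0 le_rfl
    simpa using this
  have hA : α = α' := by
    have h1 := hkey 1 zero_le_one
    rw [hN] at h1
    have h2 : Real.exp (-α*1) = Real.exp (-α'*1) :=
      mul_left_cancel₀ hN0'.ne' h1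
    have := Real.exp_injective h2
    linarith [this]
  exact ⟨hA, rfl, hN, rfl⟩
end
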